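/- Let a_1 ≤ a_2 ≤ ... ≤ a_n be real numbers and γ > 0. Define c^0 = (∑_{i=1}^n a_i)/n + 2γ/n. Suppose k is such that a_1,...,a_k < c^0 and a_{k+1},...,a_n ≥ c^0, with 1 ≤ k ≤ n. Define c^1 = (∑_{i=1}^k a_i)/k + 2γ/k. Then c^0 ≥ c^1. -/

import Mathlib

theorem stmt_0 (n : ℕ) (hn : 1 ≤ n) (a : Fin n → ℝ) (γ : ℝ) (hγ : 0 < γ)
    (hsorted : Monotone a) (k : ℕ) (hk1 : 1 ≤ k) (hkn : k ≤ n)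
    (c0 : ℝ) (hc0 : c0 = (∑ i, a i) / n + 2 * γ / n)
    (hlt : ∀ i : Fin n, (i : ℕ) < k → a i < c0)
    (hge : ∀ i : Fin n, k ≤ (i : ℕ) → c0 ≤ a i) :
    c0 ≥ (∑ i ∈ Finset.univ.filter (fun i : Fin n => (i : ℕ) < k), a i) / k + 2 * γ / k := by
  set F := Finset.univ.filter (fun i : Fin n => (i : ℕ) < k) with hF
  set G := Finset.univ.filter (fun i : Fin n => ¬ (i : ℕ) < k) with hG
  have hkpos : (0:ℝ) < (k:ℝ) := by exact_mod_cast hk1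
  have hnpos : (0:ℝ) < (n:ℝ) := by exact_mod_cast hn
  have hsplit : ∑ i, a i = (∑ i ∈ F, a i) + (∑ i ∈ G, a i) :=
    (Finset.sum_filter_add_sum_filter_not _ _ _).symm
  have hcardF : F.card = k := by
    have h : F.card = (Finset.range k).card := by
      refine Finset.card_bij (fun i _ => (i : ℕ)) ?_ ?_ ?_
      · intro i hi
        simp only [hF, Finset.mem_filter] at hi
        simpa using hi.2
      · intro i hi j hj hij
        exact Fin.val_injective hij
      · intro b hb
        simp only [Finset.mem_range] at hb
        exact ⟨⟨b, lt_of_lt_of_le hb hkn⟩, by simp [hF, hb], rfl⟩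
    rw [h, Finset.card_range]
  have hcardG : G.card = n - k := by
    have : G = Finset.univ \ F := by
      rw [hF, hG, Finset.filter_not]
    rw [this, Finset.card_sdiff_of_subset (Finset.subset_univ _), hcardF]
    simp
  have hGbound : ((n - k : ℕ) : ℝ) * c0 ≤ ∑ i ∈ G, a i := by
    rw [← hcardG]
    have := Finset.card_nsmul_le_sum G a c0 (fun i hi => hge i (by
      simp [hG] at hi; omega))
    simpa [nsmul_eq_mul] using this
  have hnc0 : (n:ℝ) * c0 = (∑ i, a i) + 2 * γ := by
    rw [hc0]; field_simp
  have hkey : (k:ℝ) * c0 ≥ (∑ i ∈ F, a i) + 2 * γ := by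
    have hcast : ((n - k : ℕ) : ℝ) = (n:ℝ) - (k:ℝ) := by
      push_cast [hkn]; ring
    rw [hcast] at hGbound
    nlinarith [hGbound, hnc0, hsplit]
  rw [ge_iff_le, ← add_div, div_le_iff₀ hkpos]
  linarith [hkey]
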